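/- Let (F_k)_{k≥0} be a sequence of real numbers bounded below, (a_k)_{k≥0} a sequence of nonnegative reals with a_0 = 0, and (L_k)_{k≥0} a sequence of reals with 0 < ℓ ≤ L_k ≤ L̄ < ∞ for all k, and let 0 ≤ δ < 1. If for every k ≥ 1 it holds that F_{k−1} − F_k ≥ (1/4)(L_k a_k² − δ² L_{k−1} a_{k−1}²), then the series ∑_{k≥1} a_k² converges (in particular ∑_{k≥1} a_k² ≤ 4(F_0 − inf_k F_k)/(ℓ(1 − δ²))). -/
import Mathlib


/-- Proposition 2.1 (square summable, abstract sequence form): if the objective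
values `F k` decrease by at least `(1/4)(L_k a_k² − δ² L_{k−1} a_{k−1}²)` at each
iteration and are bounded below, then `∑ a_k²` converges with the stated bound. -/
theorem square_summable_of_sufficient_decrease
    (F a L : ℕ → ℝ) (ℓ Lbar δ : ℝ)
    (hbdd : BddBelow (Set.range F))
    (ha : ∀ k, 0 ≤ a k) (ha0 : a 0 = 0)
    (hℓ : 0 < ℓ) (hL : ∀ k, ℓ ≤ L k ∧ L k ≤ Lbar)
    (hδ0 : 0 ≤ δ) (hδ1 : δ < 1)
    (hdec : ∀ k : ℕ,
      F k - F (k + 1) ≥ (1 / 4) * (L (k + 1) * a (k + 1) ^ 2 - δ ^ 2 * L k * a k ^ 2)) :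
    Summable (fun k => a k ^ 2) ∧
      ∑' k, a k ^ 2 ≤ 4 * (F 0 - ⨅ k, F k) / (ℓ * (1 - δ ^ 2)) := by
  set C : ℝ := ⨅ k, F k with hC
  have hδsq1 : δ ^ 2 < 1 := by nlinarith
  have hpos : 0 < ℓ * (1 - δ ^ 2) := mul_pos hℓ (by linarith)
  have hinf : ∀ n, C ≤ F n := fun n => ciInf_le hbdd n
  have hterm : ∀ k, 0 ≤ L k * a k ^ 2 := fun k =>
    mul_nonneg (le_of_lt (lt_of_lt_of_le hℓ (hL k).1)) (sq_nonneg _)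
  have key : ∀ n, ℓ * (1 - δ ^ 2) * ∑ k ∈ Finset.range n, a k ^ 2 ≤ 4 * (F 0 - C) := by
    intro n
    have tel : ∑ k ∈ Finset.range n, (F k - F (k + 1)) = F 0 - F n :=
      Finset.sum_range_sub' F n
    have h1 : ∑ k ∈ Finset.range n, (1 / 4) *
        (L (k + 1) * a (k + 1) ^ 2 - δ ^ 2 * L k * a k ^ 2) ≤ F 0 - F n := by
      rw [← tel]
      exact Finset.sum_le_sum fun k _ => hdec k
    have h2 : ∑ k ∈ Finset.range n, (1 / 4) *
        (L (k + 1) * a (k + 1) ^ 2 - δ ^ 2 * L k * a k ^ 2)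
        = (1 / 4) * (∑ k ∈ Finset.range n, L (k + 1) * a (k + 1) ^ 2)
          - (1 / 4) * δ ^ 2 * ∑ k ∈ Finset.range n, L k * a k ^ 2 := by
      rw [Finset.mul_sum, Finset.mul_sum, ← Finset.sum_sub_distrib]
      exact Finset.sum_congr rfl fun k _ => by ring
    have hshift : ∑ k ∈ Finset.range n, L (k + 1) * a (k + 1) ^ 2
        = ∑ k ∈ Finset.range (n + 1), L k * a k ^ 2 := by
      rw [Finset.sum_range_succ' (fun k => L k * a k ^ 2) n, ha0]
      ring
    have hmono : ∑ k ∈ Finset.range n, L k * a k ^ 2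
        ≤ ∑ k ∈ Finset.range (n + 1), L k * a k ^ 2 := by
      rw [Finset.sum_range_succ]
      linarith [hterm n]
    have hLa : ℓ * ∑ k ∈ Finset.range (n + 1), a k ^ 2
        ≤ ∑ k ∈ Finset.range (n + 1), L k * a k ^ 2 := by
      rw [Finset.mul_sum]
      exact Finset.sum_le_sum fun k _ =>
        mul_le_mul_of_nonneg_right (hL k).1 (sq_nonneg _)
    have hamono : ∑ k ∈ Finset.range n, a k ^ 2
        ≤ ∑ k ∈ Finset.range (n + 1), a k ^ 2 := by
      rw [Finset.sum_range_succ]; nlinarith [sq_nonneg (a n)]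
    have hδsq : δ ^ 2 ≤ 1 := by nlinarith
    have hδmul : δ ^ 2 * ∑ k ∈ Finset.range n, L k * a k ^ 2
        ≤ δ ^ 2 * ∑ k ∈ Finset.range (n + 1), L k * a k ^ 2 :=
      mul_le_mul_of_nonneg_left hmono (by positivity)
    have hSnonneg : 0 ≤ ∑ k ∈ Finset.range (n + 1), a k ^ 2 :=
      Finset.sum_nonneg fun k _ => sq_nonneg _
    have hFn : C ≤ F n := hinf n
    rw [h2, hshift] at h1
    nlinarith [hLa, hamono, hδmul, hSnonneg,
      mul_le_mul_of_nonneg_left hLa (by nlinarith : (0:ℝ) ≤ 1 - δ ^ 2)]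
  have hbound : ∀ n, ∑ k ∈ Finset.range n, a k ^ 2
      ≤ 4 * (F 0 - C) / (ℓ * (1 - δ ^ 2)) := by
    intro n
    rw [le_div_iff₀ hpos]
    calc (∑ k ∈ Finset.range n, a k ^ 2) * (ℓ * (1 - δ ^ 2))
        = ℓ * (1 - δ ^ 2) * ∑ k ∈ Finset.range n, a k ^ 2 := by ring
      _ ≤ 4 * (F 0 - C) := key n
  have hsummable : Summable (fun k => a k ^ 2) :=
    summable_of_sum_range_le (fun k => sq_nonneg _) hbound
  exact ⟨hsummable, Summable.tsum_le_of_sum_range_le hsummable hbound⟩
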